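/- Let α, β > 0 and define the chirp function f : ℝ → ℝ by f(x) = |x|^α sin(|x|^{−β}) for x ≠ 0 and f(0) = 0. Then for every ρ > 0, the Euclidean Hausdorff dimension of the graph of f over (−ρ, ρ) equals 1: dimH Gr(f, (−ρ, ρ)) = 1. In particular the local Hausdorff dimension of the graph at 0 is dim_{H,0} Gr(f) = 1. -/

import Mathlib

open Filter MeasureTheory Set Topology
open scoped ENNReal NNReal

/-- The graph of `f : ℝ → ℝ` over `V ⊆ ℝ`, as a subset of the Euclidean plane. -/
def graphE (f : ℝ → ℝ) (V : Set ℝ) : Set (EuclideanSpace ℝ (Fin 2)) :=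
  {p | ∃ u ∈ V, p = ![u, f u]}

/-- The chirp function `x ↦ |x|^α sin(|x|^{−β})`, with value `0` at `x = 0`. -/
noncomputable def chirp (α β : ℝ) (x : ℝ) : ℝ :=
  if x = 0 then 0 else |x| ^ α * Real.sin (|x| ^ (-β))

lemma chirp_even (α β : ℝ) (x : ℝ) : chirp α β (-x) = chirp α β x := by
  simp [chirp, neg_eq_zero, abs_neg]

lemma contDiffAt_chirp_pos (α β : ℝ) {x : ℝ} (hx : 0 < x) :
    ContDiffAt ℝ 1 (chirp α β) x := by
  have h1 : ContDiffAt ℝ 1 (fun y : ℝ => y ^ α * Real.sin (y ^ (-β))) x := by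
    exact (Real.contDiffAt_rpow_const_of_ne hx.ne').mul
      (Real.contDiff_sin.contDiffAt.comp x (Real.contDiffAt_rpow_const_of_ne hx.ne'))
  refine h1.congr_of_eventuallyEq ?_
  filter_upwards [Ioi_mem_nhds hx] with y hy
  have hy0 : (0:ℝ) < y := hy
  simp [chirp, hy0.ne', abs_of_pos hy0]

lemma contDiffAt_chirp (α β : ℝ) {x : ℝ} (hx : x ≠ 0) :
    ContDiffAt ℝ 1 (chirp α β) x := by
  rcases hx.lt_or_gt with h | h
  · have : chirp α β = (chirp α β) ∘ Neg.neg := by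
      funext y; simp [chirp_even]
    rw [this]
    exact (contDiffAt_chirp_pos α β (by linarith : (0:ℝ) < -x)).comp x
      (contDiff_neg.contDiffAt)
  · exact contDiffAt_chirp_pos α β h

/-- The graph parametrization `u ↦ (u, chirp α β u)`. -/
noncomputable def gmap (α β : ℝ) (u : ℝ) : EuclideanSpace ℝ (Fin 2) := WithLp.toLp 2 ![u, chirp α β u]

lemma contDiffAt_gmap (α β : ℝ) {x : ℝ} (hx : x ≠ 0) :
    ContDiffAt ℝ 1 (gmap α β) x := by
  have h : ContDiffAt ℝ 1 (fun u : ℝ => (![u, chirp α β u] : Fin 2 → ℝ)) x := by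
    rw [contDiffAt_pi]
    intro i
    fin_cases i
    · exact contDiffAt_id
    · exact contDiffAt_chirp α β hx
  exact ((EuclideanSpace.equiv (Fin 2) ℝ).symm.contDiff.contDiffAt).comp x h

lemma graphE_eq_image (α β : ℝ) (V : Set ℝ) :
    graphE (chirp α β) V = gmap α β '' V := by
  ext p
  simp only [graphE, gmap, Set.mem_setOf_eq, Set.mem_image]
  exact ⟨fun ⟨u, hu, hp⟩ => ⟨u, hu, by rw [← hp]⟩, fun ⟨u, hu, hp⟩ => ⟨u, hu, by rw [← hp]⟩⟩

lemma dimH_gmap_image_le (α β : ℝ) (V : Set ℝ) :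
    dimH (gmap α β '' V) ≤ 1 := by
  have hsub : gmap α β '' V ⊆ (gmap α β '' {x : ℝ | x ≠ 0}) ∪ {gmap α β 0} := by
    rintro p ⟨u, _, rfl⟩
    by_cases hu : u = 0
    · right; simp [hu]
    · left; exact ⟨u, hu, rfl⟩
  refine (dimH_mono hsub).trans ?_
  rw [dimH_union]
  have h1 : dimH (gmap α β '' {x : ℝ | x ≠ 0}) ≤ 1 := by
    have := dimH_image_le_of_locally_lipschitzOn (f := gmap α β) (s := {x : ℝ | x ≠ 0})
      (fun x hx => by
        obtain ⟨K, t, ht, hl⟩ := (contDiffAt_gmap α β hx).exists_lipschitzOnWith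
        exact ⟨K, t, nhdsWithin_le_nhds ht, hl⟩)
    refine this.trans ?_
    calc dimH {x : ℝ | x ≠ 0} ≤ dimH (univ : Set ℝ) := dimH_mono (subset_univ _)
      _ = 1 := Real.dimH_univ
  have h2 : dimH ({gmap α β 0} : Set (EuclideanSpace ℝ (Fin 2))) = 0 := dimH_singleton _
  rw [h2]
  simp [h1]

/-- For `α, β > 0`, the Euclidean Hausdorff dimension of the graph of the chirp function
over `(−ρ, ρ)` equals `1` for every `ρ > 0`; in particular the local Hausdorff dimension of
the graph at `0` equals `1`. -/
theorem stmt_14 (α β : ℝ) (hα : 0 < α) (hβ : 0 < β) :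
    (∀ ρ > (0 : ℝ), dimH (graphE (chirp α β) (Ioo (-ρ) ρ)) = 1) ∧
    (⨅ (ρ : ℝ) (_ : 0 < ρ), dimH (graphE (chirp α β) (Ioo (-ρ) ρ))) = 1 := by
  have key : ∀ ρ > (0 : ℝ), dimH (graphE (chirp α β) (Ioo (-ρ) ρ)) = 1 := by
    intro ρ hρ
    rw [graphE_eq_image]
    refine le_antisymm (dimH_gmap_image_le α β _) ?_
    -- lower bound via projection
    set P : EuclideanSpace ℝ (Fin 2) →L[ℝ] ℝ := EuclideanSpace.proj (0 : Fin 2) with hP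
    have hproj : ⇑P '' (gmap α β '' Ioo (-ρ) ρ) = Ioo (-ρ) ρ := by
      rw [Set.image_image]
      have h2 : (fun u : ℝ => P (gmap α β u)) = id := by
        funext u
        simp [hP, gmap]
      rw [h2, Set.image_id]
    have hlip : LipschitzWith ‖P‖₊ ⇑P := P.lipschitz
    have hdim : dimH (Ioo (-ρ) ρ : Set ℝ) = 1 := by
      have : (Ioo (-ρ) ρ : Set ℝ) ∈ 𝓝 (0 : ℝ) := Ioo_mem_nhds (by linarith) hρ
      rw [Real.dimH_of_mem_nhds this, Module.finrank_self, Nat.cast_one]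
    calc (1 : ℝ≥0∞) = dimH (Ioo (-ρ) ρ : Set ℝ) := hdim.symm
      _ = dimH (⇑P '' (gmap α β '' Ioo (-ρ) ρ)) := by rw [hproj]
      _ ≤ dimH (gmap α β '' Ioo (-ρ) ρ) := hlip.dimH_image_le _
  refine ⟨key, le_antisymm ?_ ?_⟩
  · exact iInf_le_of_le 1 (iInf_le_of_le one_pos (key 1 one_pos).le)
  · exact le_iInf fun ρ => le_iInf fun hρ => (key ρ hρ).ge
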